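/- Let k, s ∈ ℕ with s ≥ 1 and i ∈ ℕ. Let Ω be the s × s matrix with (a, b) entry C(k, i + b - a) (convention C(ξ,η)=0 for η<0 or η>ξ). Then det Ω = (∏_{j=0}^{s-1} C(k+s-1, i+j)) / (∏_{j=0}^{s-1} C(k+s-1, j)). -/

import Mathlib

open Finset Polynomial Matrix Nat

noncomputable def vzP (k s i b : ℕ) : Polynomial ℚ :=
  (∏ m ∈ Finset.Ico (b+1) s, (Polynomial.C ((i:ℚ)+m) - Polynomial.X)) *
  (∏ m ∈ Finset.range b, (Polynomial.C ((k:ℚ)-i-m) + Polynomial.X))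

lemma vzP_natDegree_lt (k s i b : ℕ) (hb : b < s) (hs : 1 ≤ s) :
    (vzP k s i b).natDegree < s := by
  have h1 : (∏ m ∈ Finset.Ico (b+1) s, (Polynomial.C ((i:ℚ)+m) - Polynomial.X)).natDegree
      ≤ (s - (b+1)) * 1 := by
    refine le_trans (Polynomial.natDegree_prod_le _ _) ?_
    calc _ ≤ ∑ _m ∈ Finset.Ico (b+1) s, 1 := Finset.sum_le_sum fun m _ => by
              refine le_trans (Polynomial.natDegree_sub_le _ _) ?_
              simp only [Polynomial.natDegree_C, Polynomial.natDegree_X]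
              omega
      _ = (s - (b+1)) * 1 := by simp [Finset.sum_const, Nat.card_Ico]
  have h2 : (∏ m ∈ Finset.range b, (Polynomial.C ((k:ℚ)-i-m) + Polynomial.X)).natDegree
      ≤ b * 1 := by
    refine le_trans (Polynomial.natDegree_prod_le _ _) ?_
    calc _ ≤ ∑ _m ∈ Finset.range b, 1 := Finset.sum_le_sum fun m _ => by
              refine le_trans (Polynomial.natDegree_add_le _ _) ?_
              simp only [Polynomial.natDegree_C, Polynomial.natDegree_X]
              omega
      _ = b * 1 := by simp
  have := Polynomial.natDegree_mul_le (p := (∏ m ∈ Finset.Ico (b+1) s, (Polynomial.C ((i:ℚ)+m) - Polynomial.X))) (q := (∏ m ∈ Finset.range b, (Polynomial.C ((k:ℚ)-i-m) + Polynomial.X)))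
  unfold vzP
  omega

lemma vzP_eval (k s i b : ℕ) (x : ℚ) : (vzP k s i b).eval x =
    (∏ m ∈ Finset.Ico (b+1) s, ((i:ℚ)+m - x)) *
    (∏ m ∈ Finset.range b, ((k:ℚ)-i-m+x)) := by
  simp [vzP, Polynomial.eval_prod]

lemma vz_eval_matrix (s k i : ℕ) (hs : 1 ≤ s) (x : Fin s → ℚ) :
    Matrix.of (fun a b : Fin s => (vzP k s i b).eval (x a)) =
    (Matrix.vandermonde x) * (Matrix.of fun (t b : Fin s) => (vzP k s i b).coeff t) := by
  ext a b
  rw [Matrix.mul_apply, Matrix.of_apply,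
    Polynomial.eval_eq_sum_range' (vzP_natDegree_lt k s i b b.isLt hs) (x a)]
  rw [← Fin.sum_univ_eq_sum_range]
  simp [Matrix.vandermonde, mul_comm]

lemma vz_detM (s k i : ℕ) (hs : 1 ≤ s) :
    (Matrix.of fun a b : Fin s => (vzP k s i (b:ℕ)).eval ((a:ℕ):ℚ)).det
      = ∏ a : Fin s, (vzP k s i (a:ℕ)).eval ((i:ℚ) + (a:ℕ)) := by
  have h1 := congrArg Matrix.det (vz_eval_matrix s k i hs (fun a => ((a:ℕ):ℚ)))
  have h2 := congrArg Matrix.det (vz_eval_matrix s k i hs (fun a => (i:ℚ) + (a:ℕ)))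
  rw [Matrix.det_mul] at h1 h2
  have hv : (Matrix.vandermonde (fun a : Fin s => ((a:ℕ):ℚ))).det
      = (Matrix.vandermonde (fun a : Fin s => (i:ℚ) + (a:ℕ))).det := by
    rw [Matrix.det_vandermonde, Matrix.det_vandermonde]
    exact Finset.prod_congr rfl fun a _ => Finset.prod_congr rfl fun b _ => by ring
  have htri : (Matrix.of fun a b : Fin s => (vzP k s i (b:ℕ)).eval ((i:ℚ) + (a:ℕ))).det
      = ∏ a : Fin s, (vzP k s i (a:ℕ)).eval ((i:ℚ) + (a:ℕ)) := by
    rw [Matrix.det_of_upperTriangular]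
    · rfl
    intro a b hba
    simp only [Matrix.of_apply, vzP_eval]
    apply mul_eq_zero_of_left
    refine Finset.prod_eq_zero (i := (a:ℕ)) ?_ (by ring)
    simp only [Finset.mem_Ico]
    exact ⟨hba, a.isLt⟩
  rw [h1, hv, ← Matrix.det_mul, ← vz_eval_matrix s k i hs, htri]

lemma vz_eval_diag (k s i a : ℕ) (ha : a < s) :
    (vzP k s i a).eval ((i:ℚ) + a) = (((s-1-a)! : ℕ) : ℚ) * (((k+a).descFactorial a : ℕ) : ℚ) := by
  rw [vzP_eval]
  congr 1
  · have : ∀ m ∈ Finset.Ico (a+1) s, ((i:ℚ) + m - ((i:ℚ)+a)) = (((m - a : ℕ)):ℚ) := by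
      intro m hm
      simp only [Finset.mem_Ico] at hm
      have : a ≤ m := by omega
      push_cast [Nat.cast_sub this]
      ring
    rw [Finset.prod_congr rfl this, ← Nat.cast_prod]
    congr 1
    rw [Finset.prod_Ico_eq_prod_range]
    have : ∀ m ∈ Finset.range (s - (a+1)), (a + 1 + m - a) = m + 1 := fun m _ => by omega
    rw [Finset.prod_congr rfl this, Finset.prod_range_add_one_eq_factorial]
    congr 1
    omega
  · have : ∀ m ∈ Finset.range a, ((k:ℚ) - i - m + ((i:ℚ)+a)) = (((k + a - m : ℕ)):ℚ) := by
      intro m hm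
      simp only [Finset.mem_range] at hm
      have : m ≤ k + a := by omega
      push_cast [Nat.cast_sub this]
      ring
    rw [Finset.prod_congr rfl this, ← Nat.cast_prod, Nat.descFactorial_eq_prod_range]

lemma vz_entry (k s i : ℕ) (hik : i ≤ k) (a b : ℕ) (ha : a < s) (hb : b < s) :
    (if a ≤ i + b then ((k.choose (i + b - a) : ℕ) : ℚ) else 0) =
    ((k ! : ℕ):ℚ) / ((((i + (s-1-a))! : ℕ):ℚ) * (((k - i + a)! : ℕ):ℚ)) *
      (vzP k s i b).eval (a:ℚ) := by
  rw [vzP_eval]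
  by_cases hab : a ≤ i + b
  · rw [if_pos hab]
    by_cases hk : i + b - a ≤ k
    · -- main case
      have hP1 : (∏ m ∈ Finset.Ico (b+1) s, ((i:ℚ) + m - a)) =
          (((i + (s-1-a)).descFactorial (s-1-b) : ℕ) : ℚ) := by
        have hcongr : ∀ m ∈ Finset.Ico (b+1) s, ((i:ℚ) + m - a) = (((i + m - a : ℕ)):ℚ) := by
          intro m hm
          simp only [Finset.mem_Ico] at hm
          have h1 : a ≤ i + m := by omega
          push_cast [Nat.cast_sub h1]
          ring
        rw [Finset.prod_congr rfl hcongr, ← Nat.cast_prod]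
        congr 1
        rw [Nat.descFactorial_eq_prod_range, Finset.prod_Ico_eq_prod_range]
        rw [← Finset.prod_range_reflect]
        apply Finset.prod_congr (by congr 1; omega)
        intro t ht
        simp only [Finset.mem_range] at ht
        omega
      have hP2 : (∏ m ∈ Finset.range b, ((k:ℚ) - i - m + a)) =
          (((k - i + a).descFactorial b : ℕ) : ℚ) := by
        have hcongr : ∀ m ∈ Finset.range b, ((k:ℚ) - i - m + a) = (((k - i + a - m : ℕ)):ℚ) := by
          intro m hm
          simp only [Finset.mem_range] at hm
          have h1 : m ≤ k - i + a := by omega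
          push_cast [Nat.cast_sub h1, Nat.cast_sub hik]
          ring
        rw [Finset.prod_congr rfl hcongr, ← Nat.cast_prod]
        congr 1
        rw [Nat.descFactorial_eq_prod_range]
      rw [hP1, hP2, Nat.cast_choose ℚ hk]
      have key1 : (i + b - a)! * (i + (s-1-a)).descFactorial (s-1-b) = (i + (s-1-a))! := by
        have h1 : s-1-b ≤ i + (s-1-a) := by omega
        have := Nat.factorial_mul_descFactorial h1
        have h2 : i + (s-1-a) - (s-1-b) = i + b - a := by omega
        rw [h2] at this
        exact this
      have key2 : (k - (i + b - a))! * (k - i + a).descFactorial b = (k - i + a)! := by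
        have h1 : b ≤ k - i + a := by omega
        have := Nat.factorial_mul_descFactorial h1
        have h2 : k - i + a - b = k - (i + b - a) := by omega
        rw [h2] at this
        exact this
      have e1 : (((i + (s-1-a))! : ℕ) : ℚ) =
          (((i + b - a)! : ℕ) : ℚ) * (((i + (s-1-a)).descFactorial (s-1-b) : ℕ) : ℚ) := by
        rw [← Nat.cast_mul, key1]
      have e2 : (((k - i + a)! : ℕ) : ℚ) =
          (((k - (i + b - a))! : ℕ) : ℚ) * (((k - i + a).descFactorial b : ℕ) : ℚ) := by
        rw [← Nat.cast_mul, key2]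
      rw [e1, e2]
      have n1 : (((i + b - a)! : ℕ) : ℚ) ≠ 0 := Nat.cast_ne_zero.mpr (Nat.factorial_ne_zero _)
      have n2 : (((k - (i + b - a))! : ℕ) : ℚ) ≠ 0 := Nat.cast_ne_zero.mpr (Nat.factorial_ne_zero _)
      have n3 : (((i + (s-1-a)).descFactorial (s-1-b) : ℕ) : ℚ) ≠ 0 := by
        rw [Nat.cast_ne_zero]
        simp only [ne_eq, Nat.descFactorial_eq_zero_iff_lt]
        omega
      have n4 : (((k - i + a).descFactorial b : ℕ) : ℚ) ≠ 0 := by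
        rw [Nat.cast_ne_zero]
        simp only [ne_eq, Nat.descFactorial_eq_zero_iff_lt]
        omega
      field_simp
    · -- choose is zero
      rw [Nat.choose_eq_zero_of_lt (by omega), Nat.cast_zero]
      have hmem : k - i + a ∈ Finset.range b := by
        simp only [Finset.mem_range]
        omega
      rw [Finset.prod_eq_zero hmem (by push_cast [Nat.cast_sub hik]; ring), mul_zero, mul_zero]
  · rw [if_neg hab]
    have hmem : a - i ∈ Finset.Ico (b+1) s := by
      simp only [Finset.mem_Ico]
      omega
    rw [Finset.prod_eq_zero hmem (by push_cast [Nat.cast_sub (by omega : i ≤ a)]; ring),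
      zero_mul, mul_zero]

lemma vz_term (k i s a j : ℕ) (hik : i ≤ k) (haj : a + j + 1 = s) :
    ((k ! : ℕ):ℚ) / ((((i + j)! : ℕ):ℚ) * (((k - i + a)! : ℕ):ℚ)) *
      ((((j)! : ℕ):ℚ) * (((k+a).descFactorial a : ℕ):ℚ))
    = (((k+s-1).choose (i+j) : ℕ):ℚ) / (((k+s-1).choose j : ℕ):ℚ) := by
  have hs1 : k + s - 1 = k + a + j := by omega
  rw [hs1]
  have hc1 : (((k+a+j).choose (i+j) : ℕ):ℚ) =
      (((k+a+j)! : ℕ):ℚ) / ((((i+j)! : ℕ):ℚ) * (((k - i + a)! : ℕ):ℚ)) := by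
    rw [Nat.cast_choose ℚ (by omega : i + j ≤ k + a + j),
      show k + a + j - (i + j) = k - i + a by omega]
  have hc2 : (((k+a+j).choose j : ℕ):ℚ) =
      (((k+a+j)! : ℕ):ℚ) / ((((j)! : ℕ):ℚ) * (((k+a)! : ℕ):ℚ)) := by
    rw [Nat.cast_choose ℚ (by omega : j ≤ k + a + j),
      show k + a + j - j = k + a by omega]
  have hd : ((k ! : ℕ):ℚ) * (((k+a).descFactorial a : ℕ):ℚ) = (((k+a)! : ℕ):ℚ) := by
    rw [← Nat.cast_mul]
    congr 1
    have := Nat.factorial_mul_descFactorial (by omega : a ≤ k + a)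
    simpa using this
  rw [hc1, hc2]
  have n0 : ∀ m : ℕ, ((m ! : ℕ):ℚ) ≠ 0 := fun m => Nat.cast_ne_zero.mpr (Nat.factorial_ne_zero m)
  have hdd : (((k+a).descFactorial a : ℕ):ℚ) = (((k+a)! : ℕ):ℚ) / ((k ! : ℕ):ℚ) := by
    rw [eq_div_iff (n0 k), mul_comm, hd]
  rw [hdd]
  field_simp

theorem vanZeipel_det_ratio (k s i : ℕ) (hs : 1 ≤ s)
    (Ω : Matrix (Fin s) (Fin s) ℚ)
    (hΩ : ∀ a b : Fin s, Ω a b =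
      if (a : ℕ) ≤ i + b then (Nat.choose k (i + b - a) : ℚ) else 0) :
    Ω.det = (∏ j ∈ Finset.range s, (Nat.choose (k + s - 1) (i + j) : ℚ)) /
            (∏ j ∈ Finset.range s, (Nat.choose (k + s - 1) j : ℚ)) := by
  by_cases hik : i ≤ k
  · -- main case
    have hfac : Ω = Matrix.diagonal (fun a : Fin s =>
          ((k ! : ℕ):ℚ) / ((((i + (s-1-(a:ℕ)))! : ℕ):ℚ) * (((k - i + (a:ℕ))! : ℕ):ℚ))) *
        Matrix.of (fun a b : Fin s => (vzP k s i (b:ℕ)).eval (((a:ℕ)):ℚ)) := by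
      ext a b
      rw [hΩ, Matrix.diagonal_mul, Matrix.of_apply]
      exact vz_entry k s i hik a b a.isLt b.isLt
    rw [hfac, Matrix.det_mul, Matrix.det_diagonal, vz_detM s k i hs]
    have hdiag : ∀ a : Fin s, (vzP k s i (a:ℕ)).eval ((i:ℚ) + (a:ℕ)) =
        (((s-1-(a:ℕ))! : ℕ) : ℚ) * (((k+(a:ℕ)).descFactorial (a:ℕ) : ℕ) : ℚ) :=
      fun a => vz_eval_diag k s i a a.isLt
    rw [Finset.prod_congr rfl (fun a _ => hdiag a), ← Finset.prod_mul_distrib]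
    rw [Fin.prod_univ_eq_prod_range (fun a => ((k ! : ℕ):ℚ) /
        ((((i + (s-1-a))! : ℕ):ℚ) * (((k - i + a)! : ℕ):ℚ)) *
        ((((s-1-a)! : ℕ) : ℚ) * (((k+a).descFactorial a : ℕ) : ℚ)))]
    rw [← Finset.prod_div_distrib]
    rw [← Finset.prod_range_reflect (fun j => (((k+s-1).choose (i+j) : ℕ):ℚ) /
        (((k+s-1).choose j : ℕ):ℚ)) s]
    refine Finset.prod_congr rfl fun a ha => ?_
    simp only [Finset.mem_range] at ha
    exact vz_term k i s a (s-1-a) hik (by omega)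
  · -- degenerate case: i > k, both sides zero
    have hrow : Ω ⟨0, hs⟩ = 0 := by
      funext b
      rw [hΩ]
      simp only [Fin.val_mk, Nat.zero_le, if_true, Nat.sub_zero]
      rw [Nat.choose_eq_zero_of_lt (by omega), Nat.cast_zero]
      rfl
    rw [Matrix.det_eq_zero_of_row_eq_zero ⟨0, hs⟩ (fun j => congrFun hrow j)]
    rw [Finset.prod_eq_zero (Finset.mem_range.mpr (by omega : s-1 < s))
      (by rw [Nat.choose_eq_zero_of_lt (by omega), Nat.cast_zero]), zero_div]
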